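/- arXiv:1402.6909 — 2 statements merged into one kernel-verified Lean document; each statement's English description precedes it below -/
import Mathlib

section
/- Complementarity dual principle: if (τ̄, λ̄, σ̄) is a critical point of Ξ₀ (i.e., all partial derivatives, where defined, vanish), then σ̄ᵢ = √(λ̄ᵢ² + gᵢ(τ̄)²) − λ̄ᵢ + gᵢ(τ̄) for each i, (τ̄, λ̄) is a critical point of P, and P(τ̄, λ̄) = Ξ₀(τ̄, λ̄, σ̄). -/
open Matrix

noncomputable def gfun (N m : ℕ) (A B : Matrix (Fin m) (Fin N) ℝ) (c : Fin m → ℝ)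
    (τ : Fin N → ℝ) : Fin m → ℝ := A.mulVec τ + B.mulVec τ - c

noncomputable def xi (N m : ℕ) (A B : Matrix (Fin m) (Fin N) ℝ) (c : Fin m → ℝ)
    (τ : Fin N → ℝ) (lam : Fin m → ℝ) (i : Fin m) : ℝ :=
  Real.sqrt (lam i ^ 2 + gfun N m A B c τ i ^ 2) - lam i + gfun N m A B c τ i

noncomputable def Xi0 (N m : ℕ) (D : Matrix (Fin N) (Fin N) ℝ)
    (A B : Matrix (Fin m) (Fin N) ℝ) (c : Fin m → ℝ) (e : Fin N → ℝ)
    (τ : Fin N → ℝ) (lam σ : Fin m → ℝ) : ℝ :=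
  (∑ i, (σ i * xi N m A B c τ lam i - (1 / 2) * σ i ^ 2)) +
  (1 / 2) * (Sum.elim τ lam ⬝ᵥ
    (Matrix.fromRows D.transpose A *
      (Matrix.fromRows D.transpose A).transpose).mulVec (Sum.elim τ lam)) -
  (-(Matrix.fromRows D.transpose A).mulVec e) ⬝ᵥ Sum.elim τ lam

noncomputable def Pfun (N m : ℕ) (D : Matrix (Fin N) (Fin N) ℝ)
    (A B : Matrix (Fin m) (Fin N) ℝ) (c : Fin m → ℝ) (e : Fin N → ℝ)
    (τ : Fin N → ℝ) (lam : Fin m → ℝ) : ℝ :=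
  (1 / 2) * (∑ i, xi N m A B c τ lam i ^ 2) +
  (1 / 2) * (Sum.elim τ lam ⬝ᵥ
    (Matrix.fromRows D.transpose A *
      (Matrix.fromRows D.transpose A).transpose).mulVec (Sum.elim τ lam)) -
  (-(Matrix.fromRows D.transpose A).mulVec e) ⬝ᵥ Sum.elim τ lam

/-- P(τ,λ) = Ξ₀(τ,λ,ξ(τ,λ)) identically. -/
lemma Pfun_eq_Xi0_xi (N m : ℕ) (D : Matrix (Fin N) (Fin N) ℝ)
    (A B : Matrix (Fin m) (Fin N) ℝ) (c : Fin m → ℝ) (e : Fin N → ℝ)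
    (τ : Fin N → ℝ) (lam : Fin m → ℝ) :
    Pfun N m D A B c e τ lam =
      Xi0 N m D A B c e τ lam (fun i => xi N m A B c τ lam i) := by
  unfold Pfun Xi0
  rw [Finset.mul_sum]
  congr 2
  apply Finset.sum_congr rfl
  intro i _
  ring

lemma gfun_differentiable (N m : ℕ) (A B : Matrix (Fin m) (Fin N) ℝ) (c : Fin m → ℝ)
    (i : Fin m) :
    Differentiable ℝ (fun p : (Fin N → ℝ) × (Fin m → ℝ) => gfun N m A B c p.1 i) := by
  have : (fun p : (Fin N → ℝ) × (Fin m → ℝ) => gfun N m A B c p.1 i) =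
      fun p => (∑ j, A i j * p.1 j) + (∑ j, B i j * p.1 j) - c i := by
    funext p
    simp [gfun, Matrix.mulVec, dotProduct]
  rw [this]
  have hproj : ∀ j : Fin N, Differentiable ℝ (fun p : (Fin N → ℝ) × (Fin m → ℝ) => p.1 j) :=
    fun j => ((ContinuousLinearMap.proj j).comp
      (ContinuousLinearMap.fst ℝ (Fin N → ℝ) (Fin m → ℝ))).differentiable
  exact (((Differentiable.fun_sum fun j _ => (differentiable_const _).mul (hproj j)).add
    (Differentiable.fun_sum fun j _ => (differentiable_const _).mul (hproj j))).sub
    (differentiable_const _))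

lemma xi_differentiableAt (N m : ℕ) (A B : Matrix (Fin m) (Fin N) ℝ) (c : Fin m → ℝ)
    (τ : Fin N → ℝ) (lam : Fin m → ℝ) (i : Fin m)
    (h : ¬(lam i = 0 ∧ gfun N m A B c τ i = 0)) :
    DifferentiableAt ℝ
      (fun p : (Fin N → ℝ) × (Fin m → ℝ) => xi N m A B c p.1 p.2 i) (τ, lam) := by
  have hlam : Differentiable ℝ (fun p : (Fin N → ℝ) × (Fin m → ℝ) => p.2 i) :=
    ((ContinuousLinearMap.proj i).comp
      (ContinuousLinearMap.snd ℝ (Fin N → ℝ) (Fin m → ℝ))).differentiable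
  have hg := gfun_differentiable N m A B c i
  have hinner : Differentiable ℝ
      (fun p : (Fin N → ℝ) × (Fin m → ℝ) => (p.2 i) ^ 2 + gfun N m A B c p.1 i ^ 2) :=
    (hlam.pow 2).add (hg.pow 2)
  have hne : lam i ^ 2 + gfun N m A B c τ i ^ 2 ≠ 0 := by
    rcases not_and_or.mp h with h' | h'
    · positivity
    · positivity
  have hsqrt : DifferentiableAt ℝ
      (fun p : (Fin N → ℝ) × (Fin m → ℝ) =>
        Real.sqrt ((p.2 i) ^ 2 + gfun N m A B c p.1 i ^ 2)) (τ, lam) :=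
    ((Real.hasDerivAt_sqrt hne).differentiableAt).comp (τ, lam) (hinner (τ, lam))
  exact ((hsqrt.sub (hlam (τ, lam))).add (hg (τ, lam)))

theorem complementarity_dual_principle (N m : ℕ) (D : Matrix (Fin N) (Fin N) ℝ)
    (A B : Matrix (Fin m) (Fin N) ℝ) (c : Fin m → ℝ) (e : Fin N → ℝ)
    (τ : Fin N → ℝ) (lam σ : Fin m → ℝ)
    (hnd : ∀ i, ¬(lam i = 0 ∧ gfun N m A B c τ i = 0))
    (hcrit : HasFDerivAt
      (fun p : ((Fin N → ℝ) × (Fin m → ℝ)) × (Fin m → ℝ) =>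
        Xi0 N m D A B c e p.1.1 p.1.2 p.2)
      (0 : ((((Fin N → ℝ) × (Fin m → ℝ)) × (Fin m → ℝ)) →L[ℝ] ℝ)) ((τ, lam), σ)) :
    (∀ i, σ i = xi N m A B c τ lam i) ∧
    HasFDerivAt (fun p : (Fin N → ℝ) × (Fin m → ℝ) => Pfun N m D A B c e p.1 p.2)
      (0 : (((Fin N → ℝ) × (Fin m → ℝ)) →L[ℝ] ℝ)) (τ, lam) ∧
    Pfun N m D A B c e τ lam = Xi0 N m D A B c e τ lam σ := by
  -- Part 1: σ i = ξ i
  have hsig : ∀ i, σ i = xi N m A B c τ lam i := by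
    intro i
    set s : Fin m → ℝ := Pi.single i (1 : ℝ) with hs
    -- the curve t ↦ ((τ, lam), σ + t • s)
    have hγ : HasDerivAt (fun t : ℝ => (((τ, lam) : (Fin N → ℝ) × (Fin m → ℝ)), σ + t • s))
        (((0, 0), s)) 0 := by
      apply HasDerivAt.prodMk (hasDerivAt_const _ _)
      have : HasDerivAt (fun t : ℝ => t • s) ((1 : ℝ) • s) 0 :=
        (hasDerivAt_id 0).smul_const s
      simpa using (this.const_add σ)
    have hcomp : HasDerivAt
        (fun t : ℝ => Xi0 N m D A B c e τ lam (σ + t • s)) 0 0 := by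
      have h0 : ((((τ, lam) : (Fin N → ℝ) × (Fin m → ℝ)), σ)
          : ((Fin N → ℝ) × (Fin m → ℝ)) × (Fin m → ℝ))
          = ((τ, lam), σ + (0:ℝ) • s) := by simp
      have := (h0 ▸ hcrit).comp_hasDerivAt 0 hγ
      exact this
    -- explicit formula for this function of t
    have hexp : (fun t : ℝ => Xi0 N m D A B c e τ lam (σ + t • s)) =
        fun t => Xi0 N m D A B c e τ lam σ
          + (xi N m A B c τ lam i - σ i) * t - (1 / 2) * t ^ 2 := by
      funext t
      unfold Xi0
      have hdiff : (∑ j, ((σ + t • s) j * xi N m A B c τ lam j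
            - (1 / 2) * (σ + t • s) j ^ 2))
          = (∑ j, (σ j * xi N m A B c τ lam j - (1 / 2) * σ j ^ 2))
            + ((xi N m A B c τ lam i - σ i) * t - (1 / 2) * t ^ 2) := by
        have : ∀ j, ((σ + t • s) j * xi N m A B c τ lam j - (1 / 2) * (σ + t • s) j ^ 2)
            = (σ j * xi N m A B c τ lam j - (1 / 2) * σ j ^ 2)
              + (if j = i then (xi N m A B c τ lam j - σ j) * t - (1 / 2) * t ^ 2 else 0) := by
          intro j
          by_cases hji : j = i
          · subst hji
            simp [hs, Pi.single_eq_same]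
            ring
          · simp [hs, Pi.single_eq_of_ne hji, hji]
        rw [Finset.sum_congr rfl (fun j _ => this j), Finset.sum_add_distrib,
          Finset.sum_ite_eq' Finset.univ i
            (fun j => (xi N m A B c τ lam j - σ j) * t - (1 / 2) * t ^ 2)]
        simp
      rw [hdiff]; ring
    rw [hexp] at hcomp
    have hpoly : HasDerivAt
        (fun t : ℝ => Xi0 N m D A B c e τ lam σ
          + (xi N m A B c τ lam i - σ i) * t - (1 / 2) * t ^ 2)
        (xi N m A B c τ lam i - σ i) 0 := by
      have h1 : HasDerivAt (fun t : ℝ => (xi N m A B c τ lam i - σ i) * t)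
          (xi N m A B c τ lam i - σ i) 0 := by
        simpa using (hasDerivAt_id (0:ℝ)).const_mul (xi N m A B c τ lam i - σ i)
      have h2 : HasDerivAt (fun t : ℝ => (1 / 2) * t ^ 2) 0 0 := by
        have := (hasDerivAt_pow 2 (0:ℝ)).const_mul (1/2 : ℝ)
        simpa using this
      simpa using ((h1.const_add _).fun_sub h2)
    have := hpoly.unique hcomp
    linarith
  -- the map p ↦ (p, ξ(p))
  have hxiVec : DifferentiableAt ℝ
      (fun p : (Fin N → ℝ) × (Fin m → ℝ) => (fun i => xi N m A B c p.1 p.2 i)) (τ, lam) := by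
    rw [differentiableAt_pi]
    exact fun i => xi_differentiableAt N m A B c τ lam i (hnd i)
  have hF : DifferentiableAt ℝ
      (fun p : (Fin N → ℝ) × (Fin m → ℝ) => (p, fun i => xi N m A B c p.1 p.2 i)) (τ, lam) :=
    differentiableAt_id.prodMk hxiVec
  have hFval : ((τ, lam), fun i => xi N m A B c τ lam i)
      = (((τ, lam) : (Fin N → ℝ) × (Fin m → ℝ)), σ) := by
    refine Prod.ext rfl ?_
    funext i; exact (hsig i).symm
  have hP : HasFDerivAt (fun p : (Fin N → ℝ) × (Fin m → ℝ) => Pfun N m D A B c e p.1 p.2)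
      (0 : (((Fin N → ℝ) × (Fin m → ℝ)) →L[ℝ] ℝ)) (τ, lam) := by
    have hF' := hF.hasFDerivAt
    have hcrit' : HasFDerivAt
        (fun p : ((Fin N → ℝ) × (Fin m → ℝ)) × (Fin m → ℝ) =>
          Xi0 N m D A B c e p.1.1 p.1.2 p.2)
        (0 : ((((Fin N → ℝ) × (Fin m → ℝ)) × (Fin m → ℝ)) →L[ℝ] ℝ))
        ((fun p : (Fin N → ℝ) × (Fin m → ℝ) => (p, fun i => xi N m A B c p.1 p.2 i)) (τ, lam)) := by
      simpa [hFval] using hcrit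
    have hcomp := hcrit'.comp (τ, lam) hF'
    have heq : ((fun p : ((Fin N → ℝ) × (Fin m → ℝ)) × (Fin m → ℝ) =>
          Xi0 N m D A B c e p.1.1 p.1.2 p.2) ∘
        (fun p : (Fin N → ℝ) × (Fin m → ℝ) => (p, fun i => xi N m A B c p.1 p.2 i)))
        = fun p : (Fin N → ℝ) × (Fin m → ℝ) => Pfun N m D A B c e p.1 p.2 := by
      funext p
      exact (Pfun_eq_Xi0_xi N m D A B c e p.1 p.2).symm
    rw [heq] at hcomp
    simpa using hcomp
  refine ⟨hsig, hP, ?_⟩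
  rw [Pfun_eq_Xi0_xi]
  congr 1
  funext i; exact (hsig i).symm
end

section
/- Suppose (τ*, λ*) is a global minimizer of P with P(τ*, λ*) = −(1/2)eᵀe. Then (τ*, λ*, 0_m) is a critical point of Ξ₀ with Ξ₀(τ*, λ*, 0_m) = −(1/2)eᵀe, and moreover ξᵢ(τ*, λ*) = 0 for all i (i.e., the Fischer-Burmeister residuals vanish) and Dτ* + e + Aᵀλ* = 0. -/
open Matrix

lemma quad_identity (N m : ℕ) (S : Matrix (Fin N ⊕ Fin m) (Fin N) ℝ) (e : Fin N → ℝ)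
    (x : Fin N ⊕ Fin m → ℝ) :
    (1 / 2) * (x ⬝ᵥ (S * S.transpose).mulVec x) - (-(S.mulVec e)) ⬝ᵥ x
      = (1 / 2) * ((S.transpose.mulVec x + e) ⬝ᵥ (S.transpose.mulVec x + e))
        - (1 / 2) * (e ⬝ᵥ e) := by
  set v := S.transpose.mulVec x with hv
  have h1 : x ⬝ᵥ (S * S.transpose).mulVec x = v ⬝ᵥ v := by
    rw [← Matrix.mulVec_mulVec, Matrix.dotProduct_mulVec, ← Matrix.mulVec_transpose]
  have h2 : (-(S.mulVec e)) ⬝ᵥ x = -(v ⬝ᵥ e) := by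
    rw [neg_dotProduct, dotProduct_comm, Matrix.dotProduct_mulVec,
      ← Matrix.mulVec_transpose]
  rw [h1, h2, add_dotProduct, dotProduct_add, dotProduct_add,
    dotProduct_comm e v]
  ring

lemma transpose_fromRows_elim (N m : ℕ) (D : Matrix (Fin N) (Fin N) ℝ)
    (A : Matrix (Fin m) (Fin N) ℝ) (τ : Fin N → ℝ) (lam : Fin m → ℝ) :
    (Matrix.fromRows D.transpose A).transpose.mulVec (Sum.elim τ lam)
      = D.mulVec τ + A.transpose.mulVec lam := by
  funext j
  simp [Matrix.mulVec, dotProduct, Fintype.sum_sum_type, Matrix.fromRows_apply_inl, Matrix.fromRows_apply_inr,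
    Matrix.transpose, mul_comm, Pi.add_apply]

lemma quad_deriv_zero (m : ℕ) (K : ℝ) :
    HasFDerivAt (fun σ : Fin m → ℝ => (∑ i, -((1/2) * σ i ^ 2)) + K)
      (0 : ((Fin m → ℝ) →L[ℝ] ℝ)) 0 := by
  have hterm : ∀ i : Fin m, HasFDerivAt (fun σ : Fin m → ℝ => -((1/2) * σ i ^ 2))
      (0 : (Fin m → ℝ) →L[ℝ] ℝ) 0 := by
    intro i
    have h1 : HasFDerivAt (fun t : ℝ => -((1/2) * t ^ 2)) (0 : ℝ →L[ℝ] ℝ) 0 := by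
      have h := (((hasDerivAt_pow 2 (0:ℝ)).const_mul (1/2 : ℝ)).neg)
      have h' : HasDerivAt (fun t : ℝ => -((1/2) * t ^ 2)) 0 0 := h.congr_deriv (by norm_num)
      have := h'.hasFDerivAt
      rwa [show ContinuousLinearMap.toSpanSingleton ℝ (0:ℝ) = 0 from by ext; simp] at this
    have hproj := (ContinuousLinearMap.proj i :
      (Fin m → ℝ) →L[ℝ] ℝ).hasFDerivAt (x := (0 : Fin m → ℝ))
    have h2 := h1.comp (0 : Fin m → ℝ) hproj
    exact h2.congr_fderiv (by simp)
  have hsum := HasFDerivAt.fun_sum (fun i (_ : i ∈ Finset.univ) => hterm i)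
  have := hsum.add_const K
  simpa using this

theorem global_min_gives_critical_point (N m : ℕ) (D : Matrix (Fin N) (Fin N) ℝ)
    (A B : Matrix (Fin m) (Fin N) ℝ) (c : Fin m → ℝ) (e : Fin N → ℝ)
    (τ : Fin N → ℝ) (lam : Fin m → ℝ)
    (hval : Pfun N m D A B c e τ lam = -((1 / 2) * (e ⬝ᵥ e)))
    (hmin : ∀ (τ' : Fin N → ℝ) (lam' : Fin m → ℝ),
      Pfun N m D A B c e τ lam ≤ Pfun N m D A B c e τ' lam') :
    Xi0 N m D A B c e τ lam 0 = -((1 / 2) * (e ⬝ᵥ e)) ∧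
    (∀ (τ' : Fin N → ℝ) (lam' : Fin m → ℝ),
      Xi0 N m D A B c e τ lam 0 ≤ Xi0 N m D A B c e τ' lam' 0) ∧
    HasFDerivAt (fun σ : Fin m → ℝ => Xi0 N m D A B c e τ lam σ)
      (0 : ((Fin m → ℝ) →L[ℝ] ℝ)) 0 ∧
    (∀ i, xi N m A B c τ lam i = 0) ∧
    D.mulVec τ + e + (A.transpose).mulVec lam = 0 := by
  set S := Matrix.fromRows D.transpose A with hS
  -- residual vector
  set w : Fin N → ℝ := D.mulVec τ + A.transpose.mulVec lam + e with hw
  have hwS : w = S.transpose.mulVec (Sum.elim τ lam) + e := by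
    rw [hw, transpose_fromRows_elim]
  -- P decomposition at the minimizer
  have hP : Pfun N m D A B c e τ lam
      = (1 / 2) * (∑ i, xi N m A B c τ lam i ^ 2)
        + ((1 / 2) * (w ⬝ᵥ w) - (1 / 2) * (e ⬝ᵥ e)) := by
    rw [Pfun, hwS, ← quad_identity]
    ring
  have hxinonneg : (0:ℝ) ≤ ∑ i, xi N m A B c τ lam i ^ 2 :=
    Finset.sum_nonneg fun i _ => sq_nonneg _
  have hwnonneg : (0:ℝ) ≤ w ⬝ᵥ w :=
    Finset.sum_nonneg fun j _ => mul_self_nonneg _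
  have hkey : (1 / 2) * (∑ i, xi N m A B c τ lam i ^ 2) + (1 / 2) * (w ⬝ᵥ w) = 0 := by
    have := hval
    rw [hP] at this
    linarith
  have hxizero : (∑ i, xi N m A B c τ lam i ^ 2) = 0 := by linarith
  have hwzero : w ⬝ᵥ w = 0 := by linarith
  have hxi : ∀ i, xi N m A B c τ lam i = 0 := by
    intro i
    have := (Finset.sum_eq_zero_iff_of_nonneg
      (fun i _ => sq_nonneg (xi N m A B c τ lam i))).mp hxizero i (Finset.mem_univ i)
    exact pow_eq_zero_iff (by norm_num) |>.mp this
  have hwz : ∀ j, w j = 0 := by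
    intro j
    have := (Finset.sum_eq_zero_iff_of_nonneg
      (fun j _ => mul_self_nonneg (w j))).mp hwzero j (Finset.mem_univ j)
    exact mul_self_eq_zero.mp this
  have hwz' : w = 0 := funext hwz
  -- value of Xi0 at 0 for arbitrary points
  have hXi0 : ∀ (τ' : Fin N → ℝ) (lam' : Fin m → ℝ),
      Xi0 N m D A B c e τ' lam' 0
        = (1 / 2) * ((S.transpose.mulVec (Sum.elim τ' lam') + e) ⬝ᵥ
            (S.transpose.mulVec (Sum.elim τ' lam') + e)) - (1 / 2) * (e ⬝ᵥ e) := by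
    intro τ' lam'
    rw [Xi0]
    have h0 : (∑ i, ((0 : Fin m → ℝ) i * xi N m A B c τ' lam' i
        - (1 / 2) * (0 : Fin m → ℝ) i ^ 2)) = 0 := by simp
    rw [h0, zero_add, quad_identity]
  have hval0 : Xi0 N m D A B c e τ lam 0 = -((1 / 2) * (e ⬝ᵥ e)) := by
    rw [hXi0, ← hwS, hwz']
    simp
  refine ⟨hval0, ?_, ?_, hxi, ?_⟩
  · intro τ' lam'
    rw [hval0, hXi0]
    have : (0:ℝ) ≤ (S.transpose.mulVec (Sum.elim τ' lam') + e) ⬝ᵥ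
        (S.transpose.mulVec (Sum.elim τ' lam') + e) :=
      Finset.sum_nonneg fun j _ => mul_self_nonneg _
    linarith
  · have heq : (fun σ : Fin m → ℝ => Xi0 N m D A B c e τ lam σ)
        = fun σ : Fin m → ℝ => (∑ i, -((1/2) * σ i ^ 2)) +
          ((1 / 2) * (Sum.elim τ lam ⬝ᵥ (S * S.transpose).mulVec (Sum.elim τ lam)) -
            (-(S.mulVec e)) ⬝ᵥ Sum.elim τ lam) := by
      funext σ
      rw [Xi0]
      simp only [hxi, mul_zero, zero_sub]
      ring
    rw [heq]
    exact quad_deriv_zero m _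
  · funext j
    have := hwz j
    simp only [hw, Pi.add_apply] at this
    simp only [Pi.add_apply, Pi.zero_apply]
    linarith
end
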